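/- Let p ≥ 6, q ≥ 7 and n ≥ 1 be natural numbers. If there exists a (p-1, q; 4)-coloring of Fin n, then there exists a (p, q; 4)-coloring of Fin ((p-1)*n). (This is the transfer form of the recurrence r_4(p,q) ≥ (p−1)·(r_4(p-1,q) − 1) + 1.) -/

import Mathlib

/-- An `(a, b; k)`-coloring of `Fin n`: a 2-coloring of the `k`-subsets
(`true` = red, `false` = blue) such that every `a`-subset contains a blue
`k`-subset and every `b`-subset contains a red `k`-subset. -/
def IsColoring (a b k n : ℕ) (χ : Finset (Fin n) → Bool) : Prop :=
  (∀ S : Finset (Fin n), S.card = a → ∃ e ⊆ S, e.card = k ∧ χ e = false) ∧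
  (∀ S : Finset (Fin n), S.card = b → ∃ e ⊆ S, e.card = k ∧ χ e = true)

lemma image_eq_singleton_aux {α β : Type*} [DecidableEq β] {f : α → β} {u : Finset α} {i : β}
    (hne : u.Nonempty) (h : ∀ x ∈ u, f x = i) : u.image f = {i} := by
  apply Finset.Subset.antisymm
  · intro b hb
    simp only [Finset.mem_image] at hb
    obtain ⟨x, hx, rfl⟩ := hb
    simp [h x hx]
  · obtain ⟨x, hx⟩ := hne
    intro b hb
    simp only [Finset.mem_singleton] at hb
    subst hb
    exact Finset.mem_image.mpr ⟨x, hx, h x hx⟩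

lemma lift_subset_aux {α β : Type*} [DecidableEq α] [DecidableEq β] {f : α → β} {s : Finset α}
    (A : Finset β) : A ⊆ s.image f → ∃ t ⊆ s, t.image f = A ∧ t.card = A.card := by
  induction A using Finset.induction with
  | empty => intro _; exact ⟨∅, by simp⟩
  | @insert a A ha ih =>
    intro hA
    have haimg : a ∈ s.image f := hA (Finset.mem_insert_self a A)
    obtain ⟨x, hx, hfx⟩ := Finset.mem_image.mp haimg
    obtain ⟨t, hts, htimg, htcard⟩ := ih ((Finset.subset_insert a A).trans hA)
    have hxt : x ∉ t := by
      intro hxt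
      have : f x ∈ t.image f := Finset.mem_image_of_mem f hxt
      rw [htimg, hfx] at this
      exact ha this
    refine ⟨insert x t, Finset.insert_subset hx hts, ?_, ?_⟩
    · rw [Finset.image_insert, htimg, hfx]
    · rw [Finset.card_insert_of_notMem hxt, htcard, Finset.card_insert_of_notMem ha]

theorem stmt_1 (p q n : ℕ) (hp : 6 ≤ p) (hq : 7 ≤ q) (hn : 1 ≤ n)
    (h : ∃ χ : Finset (Fin n) → Bool, IsColoring (p - 1) q 4 n χ) :
    ∃ χ' : Finset (Fin ((p - 1) * n)) → Bool, IsColoring p q 4 ((p - 1) * n) χ' := by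
  classical
  obtain ⟨χ, h1, h2⟩ := h
  set d := p - 1 with hdd
  have hd5 : 5 ≤ d := by omega
  have hd0 : 0 < d := by omega
  set π : Fin (d * n) → Fin n := fun x => ⟨x.val / d, Nat.div_lt_of_lt_mul x.isLt⟩ with hπ
  -- each fiber of π within any set has at most d elements
  have fiber_le : ∀ (S : Finset (Fin (d * n))) (i : Fin n),
      (S.filter (fun x => π x = i)).card ≤ d := by
    intro S i
    have : (S.filter (fun x => π x = i)).card ≤ (Finset.range d).card := by
      apply Finset.card_le_card_of_injOn (fun x => x.val % d)
      · intro x _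
        exact Finset.mem_range.mpr (Nat.mod_lt _ hd0)
      · intro x hx y hy hxy
        simp only [Finset.mem_coe, Finset.mem_filter] at hx hy
        have hπval : ∀ z : Fin (d * n), ((π z : Fin n) : ℕ) = (z : ℕ) / d := fun _ => rfl
        have hdiv : ((π x : Fin n) : ℕ) = ((π y : Fin n) : ℕ) :=
          congrArg Fin.val (hx.2.trans hy.2.symm)
        rw [hπval, hπval] at hdiv
        have hmod : (x : ℕ) % d = (y : ℕ) % d := by simpa using hxy
        have ex := Nat.div_add_mod (x : ℕ) d
        have ey := Nat.div_add_mod (y : ℕ) d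
        have : (x : ℕ) = (y : ℕ) := by rw [← ex, ← ey, hdiv, hmod]
        exact Fin.ext this
    simpa using this
  -- fibers are nonempty on image members
  set χ' : Finset (Fin (d * n)) → Bool := fun e =>
    if (e.image π).card = 4 then χ (e.image π)
    else if (e.image π).card = 2 then false else true with hχ'
  refine ⟨χ', ?_, ?_⟩
  · -- every p-set has a blue 4-subset
    intro S hS
    set I := S.image π with hI
    have hsum : S.card = ∑ i ∈ I, (S.filter (fun x => π x = i)).card :=
      Finset.card_eq_sum_card_fiberwise (fun x hx => Finset.mem_image_of_mem π hx)
    by_cases hc3 : ∃ i, 3 ≤ (S.filter (fun x => π x = i)).card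
    · obtain ⟨i, hi⟩ := hc3
      obtain ⟨u, hu, hucard⟩ := Finset.exists_subset_card_eq hi
      have huS : u ⊆ S := hu.trans (Finset.filter_subset _ _)
      have hui : ∀ x ∈ u, π x = i := fun x hx => (Finset.mem_filter.mp (hu hx)).2
      -- find z ∈ S with π z ≠ i
      have hlt : (S.filter (fun x => π x = i)).card < S.card := by
        have := fiber_le S i; omega
      obtain ⟨z, hzS, hznot⟩ : ∃ z ∈ S, z ∉ S.filter (fun x => π x = i) := by
        by_contra hcon
        push_neg at hcon
        have := Finset.card_le_card hcon
        omega
      have hzi : π z ≠ i := fun hzi => hznot (Finset.mem_filter.mpr ⟨hzS, hzi⟩)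
      have hzu : z ∉ u := fun hzu => hzi (hui z hzu)
      refine ⟨insert z u, Finset.insert_subset hzS huS, ?_, ?_⟩
      · rw [Finset.card_insert_of_notMem hzu, hucard]
      · have himg : (insert z u).image π = insert (π z) {i} := by
          rw [Finset.image_insert, image_eq_singleton_aux (by rw [← Finset.card_pos, hucard]; norm_num) hui]
        have hcard2 : ((insert z u).image π).card = 2 := by
          rw [himg, Finset.card_insert_of_notMem (by simpa using hzi)]
          simp
        simp only [hχ', hcard2]
        simp
    · by_cases hc22 : ∃ i j, i ≠ j ∧ 2 ≤ (S.filter (fun x => π x = i)).card ∧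
          2 ≤ (S.filter (fun x => π x = j)).card
      · obtain ⟨i, j, hij, hi, hj⟩ := hc22
        obtain ⟨u, hu, hucard⟩ := Finset.exists_subset_card_eq hi
        obtain ⟨v, hv, hvcard⟩ := Finset.exists_subset_card_eq hj
        have hui : ∀ x ∈ u, π x = i := fun x hx => (Finset.mem_filter.mp (hu hx)).2
        have hvj : ∀ x ∈ v, π x = j := fun x hx => (Finset.mem_filter.mp (hv hx)).2
        have hdisj : Disjoint u v := by
          rw [Finset.disjoint_left]
          intro x hxu hxv
          exact hij ((hui x hxu) ▸ (hvj x hxv) ▸ rfl)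
        refine ⟨u ∪ v, Finset.union_subset (hu.trans (Finset.filter_subset _ _))
          (hv.trans (Finset.filter_subset _ _)), ?_, ?_⟩
        · rw [Finset.card_union_of_disjoint hdisj, hucard, hvcard]
        · have himg : (u ∪ v).image π = {i} ∪ {j} := by
            rw [Finset.image_union,
              image_eq_singleton_aux (by rw [← Finset.card_pos, hucard]; norm_num) hui,
              image_eq_singleton_aux (by rw [← Finset.card_pos, hvcard]; norm_num) hvj]
          have hcard2 : ((u ∪ v).image π).card = 2 := by
            rw [himg]
            rw [← Finset.insert_eq, Finset.card_insert_of_notMem (by simpa using hij)]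
            simp
          simp only [hχ', hcard2]
          simp
      · -- all fibers ≤ 2, at most one fiber of size 2 : image is large
        push_neg at hc3
        have hfib2 : ∀ i, (S.filter (fun x => π x = i)).card ≤ 2 := fun i => by
          have := hc3 i; omega
        have hIcard : p - 1 ≤ I.card := by
          by_cases hone : ∃ i0 ∈ I, 2 ≤ (S.filter (fun x => π x = i0)).card
          · obtain ⟨i0, hi0I, hi0⟩ := hone
            have hrest : ∑ i ∈ I.erase i0, (S.filter (fun x => π x = i)).card
                ≤ (I.erase i0).card := by
              have h11 : ∑ i ∈ I.erase i0, (S.filter (fun x => π x = i)).card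
                  ≤ ∑ _i ∈ I.erase i0, 1 := by
                apply Finset.sum_le_sum
                intro i hiI
                have hine : i ≠ i0 := Finset.ne_of_mem_erase hiI
                by_contra hcon
                push_neg at hcon
                push_neg at hc22
                have := hc22 i i0 hine (by omega)
                omega
              simpa using h11
            have hsplit : (S.filter (fun x => π x = i0)).card +
                ∑ i ∈ I.erase i0, (S.filter (fun x => π x = i)).card = S.card := by
              rw [hsum]
              exact Finset.add_sum_erase I (fun i => (S.filter (fun x => π x = i)).card) hi0I
            have hle := hfib2 i0
            have hcer : (I.erase i0).card = I.card - 1 := Finset.card_erase_of_mem hi0I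
            have hpos : 1 ≤ I.card := Finset.card_pos.mpr ⟨i0, hi0I⟩
            omega
          · push_neg at hone
            have : S.card ≤ ∑ _i ∈ I, 1 := by
              rw [hsum]
              apply Finset.sum_le_sum
              intro i hiI
              have := hone i hiI
              omega
            simp only [Finset.sum_const, smul_eq_mul, mul_one] at this
            omega
        obtain ⟨I', hI'sub, hI'card⟩ := Finset.exists_subset_card_eq hIcard
        obtain ⟨e', he'sub, he'card, he'blue⟩ := h1 I' hI'card
        obtain ⟨t, hts, htimg, htcard⟩ := lift_subset_aux e' (he'sub.trans hI'sub)
        refine ⟨t, hts, by rw [htcard, he'card], ?_⟩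
        simp [hχ', htimg, he'card, he'blue]
  · -- every q-set has a red 4-subset
    intro T hT
    set I := T.image π with hI
    have hsum : T.card = ∑ i ∈ I, (T.filter (fun x => π x = i)).card :=
      Finset.card_eq_sum_card_fiberwise (fun x hx => Finset.mem_image_of_mem π hx)
    by_cases hc4 : ∃ i, 4 ≤ (T.filter (fun x => π x = i)).card
    · obtain ⟨i, hi⟩ := hc4
      obtain ⟨u, hu, hucard⟩ := Finset.exists_subset_card_eq hi
      have hui : ∀ x ∈ u, π x = i := fun x hx => (Finset.mem_filter.mp (hu hx)).2
      refine ⟨u, hu.trans (Finset.filter_subset _ _), hucard, ?_⟩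
      have himg : u.image π = {i} :=
        image_eq_singleton_aux (by rw [← Finset.card_pos, hucard]; norm_num) hui
      have hcard1 : (u.image π).card = 1 := by rw [himg]; simp
      simp only [hχ', hcard1]
      simp
    · push_neg at hc4
      have hfib3 : ∀ i, (T.filter (fun x => π x = i)).card ≤ 3 := fun i => by
        have := hc4 i; omega
      by_cases hc2 : ∃ i, 2 ≤ (T.filter (fun x => π x = i)).card
      · obtain ⟨i, hi⟩ := hc2
        have hiI : i ∈ I := by
          have : (T.filter (fun x => π x = i)).Nonempty := by
            rw [← Finset.card_pos]; omega
          obtain ⟨x, hx⟩ := this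
          have := Finset.mem_filter.mp hx
          exact this.2 ▸ Finset.mem_image_of_mem π this.1
        have hIcard : 3 ≤ I.card := by
          have : T.card ≤ ∑ _i ∈ I, 3 := by
            rw [hsum]
            exact Finset.sum_le_sum (fun i _ => hfib3 i)
          simp only [Finset.sum_const, smul_eq_mul] at this
          omega
        have herase : 1 < (I.erase i).card := by
          rw [Finset.card_erase_of_mem hiI]; omega
        obtain ⟨j, hj, k, hk, hjk⟩ := Finset.one_lt_card.mp herase
        have hji : j ≠ i := Finset.ne_of_mem_erase hj
        have hki : k ≠ i := Finset.ne_of_mem_erase hk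
        obtain ⟨z, hzT, hzj⟩ := Finset.mem_image.mp (Finset.mem_of_mem_erase hj)
        obtain ⟨w, hwT, hwk⟩ := Finset.mem_image.mp (Finset.mem_of_mem_erase hk)
        obtain ⟨u, hu, hucard⟩ := Finset.exists_subset_card_eq hi
        have hui : ∀ x ∈ u, π x = i := fun x hx => (Finset.mem_filter.mp (hu hx)).2
        have huT : u ⊆ T := hu.trans (Finset.filter_subset _ _)
        have hzw : z ≠ w := fun hzw => hjk (hzj ▸ hzw ▸ hwk ▸ rfl)
        have hzu : z ∉ u := fun hzu => hji (hzj ▸ hui z hzu ▸ rfl)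
        have hwu : w ∉ u := fun hwu => hki (hwk ▸ hui w hwu ▸ rfl)
        refine ⟨insert z (insert w u),
          Finset.insert_subset hzT (Finset.insert_subset hwT huT), ?_, ?_⟩
        · rw [Finset.card_insert_of_notMem (by simp [hzw, hzu]),
            Finset.card_insert_of_notMem hwu, hucard]
        · have himg : (insert z (insert w u)).image π = insert j (insert k {i}) := by
            rw [Finset.image_insert, Finset.image_insert,
              image_eq_singleton_aux (by rw [← Finset.card_pos, hucard]; norm_num) hui,
              hzj, hwk]
          have hcard3 : ((insert z (insert w u)).image π).card = 3 := by
            rw [himg, Finset.card_insert_of_notMem (by simp [hjk, hji]),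
              Finset.card_insert_of_notMem (by simpa using hki)]
            simp
          simp only [hχ', hcard3]
          simp
      · push_neg at hc2
        have hIq : q ≤ I.card := by
          have : T.card ≤ ∑ _i ∈ I, 1 := by
            rw [hsum]
            apply Finset.sum_le_sum
            intro i _
            have := hc2 i; omega
          simp only [Finset.sum_const, smul_eq_mul, mul_one] at this
          omega
        obtain ⟨I', hI'sub, hI'card⟩ := Finset.exists_subset_card_eq hIq
        obtain ⟨e', he'sub, he'card, he'red⟩ := h2 I' hI'card
        obtain ⟨t, hts, htimg, htcard⟩ := lift_subset_aux e' (he'sub.trans hI'sub)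
        refine ⟨t, hts, by rw [htcard, he'card], ?_⟩
        simp [hχ', htimg, he'card, he'red]
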